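/- arXiv:0806.1836 — 2 statements merged into one kernel-verified Lean document; each statement's English description precedes it below -/
import Mathlib

section
/- Define Ψ_F(x) = -ψ(1-x) - ψ(1+x) + ψ(1/2 - x/2) + ψ(1/2 + x/2) for x ∈ [0, 2/38]. Then Ψ_F(x) < 0 and Ψ_F is (weakly) decreasing on this interval. -/
noncomputable def digamma (x : ℝ) : ℝ := deriv (fun y => Real.log (Real.Gamma y)) x

noncomputable def PsiF (x : ℝ) : ℝ :=
  -digamma (1 - x) - digamma (1 + x) + digamma (1 / 2 - x / 2) + digamma (1 / 2 + x / 2)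

open Real Filter Topology Set Finset

lemma diffAt_logGamma {x : ℝ} (hx : 0 < x) :
    DifferentiableAt ℝ (fun y => Real.log (Real.Gamma y)) x :=
  (Real.differentiableAt_Gamma fun m => ((neg_nonpos.mpr m.cast_nonneg).trans_lt hx).ne').log
    (Real.Gamma_pos_of_pos hx).ne'

lemma hasDerivAt_logGamma {x : ℝ} (hx : 0 < x) :
    HasDerivAt (fun y => Real.log (Real.Gamma y)) (digamma x) x :=
  (diffAt_logGamma hx).hasDerivAt

lemma digamma_add_one {x : ℝ} (hx : 0 < x) : digamma (x + 1) = digamma x + 1 / x := by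
  have h1 : HasDerivAt (fun y => Real.log (Real.Gamma (y + 1))) (digamma (x + 1)) x :=
    HasDerivAt.comp_add_const x 1 (hasDerivAt_logGamma (by linarith))
  have h2 : HasDerivAt (fun y => Real.log y + Real.log (Real.Gamma y))
      (x⁻¹ + digamma x) x :=
    (Real.hasDerivAt_log hx.ne').add (hasDerivAt_logGamma hx)
  have heq : (fun y => Real.log y + Real.log (Real.Gamma y)) =ᶠ[𝓝 x]
      (fun y => Real.log (Real.Gamma (y + 1))) := by
    filter_upwards [eventually_gt_nhds hx] with y hy
    rw [Real.Gamma_add_one hy.ne', Real.log_mul hy.ne' (Real.Gamma_pos_of_pos hy).ne']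
  have := (h2.congr_of_eventuallyEq heq.symm).unique h1
  rw [← this, one_div]; ring

lemma digamma_dup {s : ℝ} (hs : 0 < s) :
    digamma s + digamma (s + 1 / 2) = 2 * digamma (2 * s) - 2 * Real.log 2 := by
  have h2s : (0 : ℝ) < 2 * s := by linarith
  have h1 : HasDerivAt (fun y => Real.log (Real.Gamma y) + Real.log (Real.Gamma (y + 1 / 2)))
      (digamma s + digamma (s + 1 / 2)) s :=
    (hasDerivAt_logGamma hs).add
      (HasDerivAt.comp_add_const s (1 / 2) (hasDerivAt_logGamma (by linarith)))
  have hmul : HasDerivAt (fun y : ℝ => 2 * y) 2 s := by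
    simpa using (hasDerivAt_id s).const_mul 2
  have hg : HasDerivAt (fun y : ℝ => Real.log (Real.Gamma (2 * y)))
      (digamma (2 * s) * 2) s := by
    simpa [Function.comp_def] using (hasDerivAt_logGamma h2s).comp s hmul
  have hlin : HasDerivAt (fun y : ℝ => (1 - 2 * y) * Real.log 2 + Real.log (Real.sqrt π))
      (-2 * Real.log 2) s := by
    have : HasDerivAt (fun y : ℝ => (1 - 2 * y) * Real.log 2) (-2 * Real.log 2) s := by
      simpa using (((hasDerivAt_id s).const_mul 2).const_sub 1).mul_const (Real.log 2)
    simpa using this.add_const (Real.log (Real.sqrt π))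
  have h2 : HasDerivAt
      (fun y : ℝ => Real.log (Real.Gamma (2 * y)) + ((1 - 2 * y) * Real.log 2 +
        Real.log (Real.sqrt π)))
      (digamma (2 * s) * 2 + -2 * Real.log 2) s := hg.add hlin
  have heq : (fun y => Real.log (Real.Gamma y) + Real.log (Real.Gamma (y + 1 / 2))) =ᶠ[𝓝 s]
      (fun y : ℝ => Real.log (Real.Gamma (2 * y)) + ((1 - 2 * y) * Real.log 2 +
        Real.log (Real.sqrt π))) := by
    filter_upwards [eventually_gt_nhds hs] with y hy
    have hΓ1 : (0 : ℝ) < Real.Gamma y := Real.Gamma_pos_of_pos hy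
    have hΓ2 : (0 : ℝ) < Real.Gamma (y + 1 / 2) := Real.Gamma_pos_of_pos (by linarith)
    have hΓ3 : (0 : ℝ) < Real.Gamma (2 * y) := Real.Gamma_pos_of_pos (by linarith)
    have hrp : (0 : ℝ) < (2 : ℝ) ^ (1 - 2 * y) := Real.rpow_pos_of_pos two_pos _
    have hsp : (0 : ℝ) < Real.sqrt π := Real.sqrt_pos.mpr Real.pi_pos
    have key : Real.Gamma y * Real.Gamma (y + 1 / 2)
        = Real.Gamma (2 * y) * (2 : ℝ) ^ (1 - 2 * y) * Real.sqrt π :=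
      Real.Gamma_mul_Gamma_add_half y
    have := congrArg Real.log key
    rw [Real.log_mul hΓ1.ne' hΓ2.ne', Real.log_mul (by positivity) hsp.ne',
      Real.log_mul hΓ3.ne' hrp.ne', Real.log_rpow two_pos] at this
    rw [this]; ring
  have := (h2.congr_of_eventuallyEq heq).unique h1
  linarith

lemma digamma_monotone : MonotoneOn digamma (Set.Ioi (0 : ℝ)) := by
  have hc : ConvexOn ℝ (Set.Ioi (0 : ℝ)) fun y => Real.log (Real.Gamma y) := by
    simpa [Function.comp_def] using Real.convexOn_log_Gamma
  have := hc.monotoneOn_deriv fun x hx => diffAt_logGamma hx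
  exact this

lemma digamma_add_nat {a : ℝ} (ha : 0 < a) (N : ℕ) :
    digamma (a + N) = digamma a + ∑ n ∈ Finset.range N, 1 / (a + n) := by
  induction N with
  | zero => simp
  | succ n ih =>
    have h : a + ((n : ℝ) + 1) = (a + n) + 1 := by ring
    have hpos : (0 : ℝ) < a + n := by positivity
    rw [Nat.cast_succ, h, digamma_add_one hpos, ih, Finset.sum_range_succ]
    ring

lemma tendsto_digamma_diff {a b : ℝ} (ha : 0 < a) (hab : a ≤ b) (hba : b ≤ a + 1) :
    Tendsto (fun N : ℕ => ∑ n ∈ Finset.range N, (1 / (a + n) - 1 / (b + n))) atTop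
      (𝓝 (digamma b - digamma a)) := by
  have hb : 0 < b := lt_of_lt_of_le ha hab
  have key : ∀ N : ℕ, ∑ n ∈ Finset.range N, (1 / (a + n) - 1 / (b + n))
      = (digamma b - digamma a) - (digamma (b + N) - digamma (a + N)) := by
    intro N
    have h1 := digamma_add_nat ha N
    have h2 := digamma_add_nat hb N
    rw [Finset.sum_sub_distrib]
    linarith
  have hzero : Tendsto (fun N : ℕ => digamma (b + N) - digamma (a + N)) atTop (𝓝 0) := by
    have hub : ∀ N : ℕ, digamma (b + N) - digamma (a + N) ≤ 1 / (a + N) := by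
      intro N
      have haN : (0 : ℝ) < a + N := by positivity
      have h1 : digamma (b + N) ≤ digamma ((a + N) + 1) := by
        apply digamma_monotone (Set.mem_Ioi.2 (by positivity)) (Set.mem_Ioi.2 (by positivity))
        push_cast; linarith
      have h2 := digamma_add_one haN
      linarith
    have hlb : ∀ N : ℕ, 0 ≤ digamma (b + N) - digamma (a + N) := by
      intro N
      have := digamma_monotone (Set.mem_Ioi.2 (by positivity : (0:ℝ) < a + N))
        (Set.mem_Ioi.2 (by positivity : (0:ℝ) < b + N)) (by linarith)
      linarith
    have htail : Tendsto (fun N : ℕ => 1 / (a + N)) atTop (𝓝 0) := by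
      have h : Tendsto (fun N : ℕ => a + (N : ℝ)) atTop atTop :=
        tendsto_atTop_add_const_left _ a tendsto_natCast_atTop_atTop
      simpa [one_div, Pi.inv_def] using h.inv_tendsto_atTop
    exact squeeze_zero hlb hub htail
  have : Tendsto (fun N : ℕ => (digamma b - digamma a) -
      (digamma (b + N) - digamma (a + N))) atTop (𝓝 ((digamma b - digamma a) - 0)) :=
    tendsto_const_nhds.sub hzero
  have hfun : (fun N : ℕ => ∑ n ∈ Finset.range N, (1 / (a + n) - 1 / (b + n)))
      = fun N : ℕ => (digamma b - digamma a) - (digamma (b + N) - digamma (a + N)) :=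
    funext key
  rw [hfun]
  simpa using this

lemma psiF_eq {x : ℝ} (hx0 : 0 ≤ x) (hx : x ≤ 2 / 38) :
    PsiF x = (digamma (1 + x) - digamma (1 + x / 2))
      + (digamma (1 - x) - digamma (1 - x / 2)) - 4 * Real.log 2 := by
  have d1 := digamma_dup (s := 1 / 2 + x / 2) (by linarith)
  have d2 := digamma_dup (s := 1 / 2 - x / 2) (by linarith)
  have e1 : (1 : ℝ) / 2 + x / 2 + 1 / 2 = 1 + x / 2 := by ring
  have e2 : 2 * ((1 : ℝ) / 2 + x / 2) = 1 + x := by ring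
  have e3 : (1 : ℝ) / 2 - x / 2 + 1 / 2 = 1 - x / 2 := by ring
  have e4 : 2 * ((1 : ℝ) / 2 - x / 2) = 1 - x := by ring
  rw [e1, e2] at d1
  rw [e3, e4] at d2
  unfold PsiF
  linarith

lemma term_key {m x : ℝ} (hm : 1 ≤ m) (hx0 : 0 ≤ x) (hx : x ≤ 2 / 38) :
    1 / (m + x / 2) - 1 / (m + x) + (1 / (m - x / 2) - 1 / (m - x))
      = -((3 / 2) * m * x ^ 2 / ((m ^ 2 - x ^ 2 / 4) * (m ^ 2 - x ^ 2))) := by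
  have h1 : m + x / 2 ≠ 0 := by nlinarith
  have h2 : m + x ≠ 0 := by nlinarith
  have h3 : m - x / 2 ≠ 0 := by nlinarith
  have h4 : m - x ≠ 0 := by nlinarith
  have h5 : m ^ 2 - x ^ 2 / 4 ≠ 0 := by nlinarith
  have h6 : m ^ 2 - x ^ 2 ≠ 0 := by nlinarith
  have hC : ((m ^ 2 - x ^ 2 / 4) * (m ^ 2 - x ^ 2)) ≠ 0 := mul_ne_zero h5 h6
  have h3' : m * 2 - x ≠ 0 := by nlinarith
  have h1' : m * 2 + x ≠ 0 := by nlinarith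
  rw [← neg_div, eq_div_iff hC]
  field_simp
  ring

lemma term_nonpos {m x : ℝ} (hm : 1 ≤ m) (hx0 : 0 ≤ x) (hx : x ≤ 2 / 38) :
    1 / (m + x / 2) - 1 / (m + x) + (1 / (m - x / 2) - 1 / (m - x)) ≤ 0 := by
  rw [term_key hm hx0 hx]
  have h5 : (0:ℝ) < m ^ 2 - x ^ 2 / 4 := by nlinarith
  have h6 : (0:ℝ) < m ^ 2 - x ^ 2 := by nlinarith
  have : (0:ℝ) ≤ (3 / 2) * m * x ^ 2 / ((m ^ 2 - x ^ 2 / 4) * (m ^ 2 - x ^ 2)) := by positivity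
  linarith

lemma term_mono {m x y : ℝ} (hm : 1 ≤ m) (hx0 : 0 ≤ x) (hxy : x ≤ y) (hy : y ≤ 2 / 38) :
    1 / (m + y / 2) - 1 / (m + y) + (1 / (m - y / 2) - 1 / (m - y))
      ≤ 1 / (m + x / 2) - 1 / (m + x) + (1 / (m - x / 2) - 1 / (m - x)) := by
  have hy0 : 0 ≤ y := le_trans hx0 hxy
  have hx' : x ≤ 2 / 38 := le_trans hxy hy
  rw [term_key hm hx0 hx', term_key hm hy0 hy]
  have h5 : (0:ℝ) < m ^ 2 - y ^ 2 / 4 := by nlinarith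
  have h6 : (0:ℝ) < m ^ 2 - y ^ 2 := by nlinarith
  have h5' : (0:ℝ) < m ^ 2 - x ^ 2 / 4 := by nlinarith
  have h6' : (0:ℝ) < m ^ 2 - x ^ 2 := by nlinarith
  have hxx : x ^ 2 ≤ y ^ 2 := by nlinarith
  have hden : (m ^ 2 - y ^ 2 / 4) * (m ^ 2 - y ^ 2) ≤ (m ^ 2 - x ^ 2 / 4) * (m ^ 2 - x ^ 2) := by
    nlinarith
  have : (3 / 2) * m * x ^ 2 / ((m ^ 2 - x ^ 2 / 4) * (m ^ 2 - x ^ 2))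
      ≤ (3 / 2) * m * y ^ 2 / ((m ^ 2 - y ^ 2 / 4) * (m ^ 2 - y ^ 2)) := by
    apply div_le_div₀ (by positivity) (by nlinarith) (by positivity) hden
  linarith

lemma tendsto_psiF_sum {x : ℝ} (hx0 : 0 ≤ x) (hx : x ≤ 2 / 38) :
    Tendsto (fun N : ℕ => ∑ n ∈ Finset.range N,
        (1 / (1 + (n : ℝ) + x / 2) - 1 / (1 + (n : ℝ) + x)
          + (1 / (1 + (n : ℝ) - x / 2) - 1 / (1 + (n : ℝ) - x)))) atTop
      (𝓝 (PsiF x + 4 * Real.log 2)) := by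
  have t1 : Tendsto (fun N : ℕ => ∑ n ∈ Finset.range N,
      (1 / (1 + x / 2 + n) - 1 / (1 + x + n))) atTop
      (𝓝 (digamma (1 + x) - digamma (1 + x / 2))) :=
    tendsto_digamma_diff (by linarith) (by linarith) (by linarith)
  have t2 : Tendsto (fun N : ℕ => ∑ n ∈ Finset.range N,
      (1 / (1 - x + n) - 1 / (1 - x / 2 + n))) atTop
      (𝓝 (digamma (1 - x / 2) - digamma (1 - x))) :=
    tendsto_digamma_diff (by linarith) (by linarith) (by linarith)
  have := t1.sub t2
  have heq : (fun N : ℕ => (∑ n ∈ Finset.range N, (1 / (1 + x / 2 + n) - 1 / (1 + x + n)))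
      - ∑ n ∈ Finset.range N, (1 / (1 - x + n) - 1 / (1 - x / 2 + n)))
      = fun N : ℕ => ∑ n ∈ Finset.range N,
        (1 / (1 + (n : ℝ) + x / 2) - 1 / (1 + (n : ℝ) + x)
          + (1 / (1 + (n : ℝ) - x / 2) - 1 / (1 + (n : ℝ) - x))) := by
    funext N
    rw [← Finset.sum_sub_distrib]
    apply Finset.sum_congr rfl
    intro n _
    have e1 : 1 + x / 2 + (n : ℝ) = 1 + (n : ℝ) + x / 2 := by ring
    have e2 : 1 + x + (n : ℝ) = 1 + (n : ℝ) + x := by ring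
    have e3 : 1 - x / 2 + (n : ℝ) = 1 + (n : ℝ) - x / 2 := by ring
    have e4 : 1 - x + (n : ℝ) = 1 + (n : ℝ) - x := by ring
    rw [e1, e2, e3, e4]
    ring
  rw [heq] at this
  have hval : digamma (1 + x) - digamma (1 + x / 2)
      - (digamma (1 - x / 2) - digamma (1 - x)) = PsiF x + 4 * Real.log 2 := by
    rw [psiF_eq hx0 hx]; ring
  rwa [hval] at this

theorem PsiF_neg_and_decreasing :
    (∀ x ∈ Set.Icc (0 : ℝ) (2 / 38), PsiF x < 0) ∧
      AntitoneOn PsiF (Set.Icc (0 : ℝ) (2 / 38)) := by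
  constructor
  · intro x hx
    obtain ⟨hx0, hx1⟩ := hx
    have hlim := tendsto_psiF_sum hx0 hx1
    have hle : PsiF x + 4 * Real.log 2 ≤ 0 := by
      refine le_of_tendsto hlim (Eventually.of_forall fun N => ?_)
      apply Finset.sum_nonpos
      intro n _
      have hm : (1 : ℝ) ≤ 1 + (n : ℝ) := by
        have := Nat.cast_nonneg (α := ℝ) n; linarith
      exact term_nonpos hm hx0 hx1
    have hlog : (0 : ℝ) < Real.log 2 := Real.log_pos (by norm_num)
    linarith
  · intro x hx y hy hxy
    obtain ⟨hx0, hx1⟩ := hx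
    obtain ⟨hy0, hy1⟩ := hy
    have hlimx := tendsto_psiF_sum hx0 hx1
    have hlimy := tendsto_psiF_sum hy0 hy1
    have : PsiF y + 4 * Real.log 2 ≤ PsiF x + 4 * Real.log 2 := by
      refine le_of_tendsto_of_tendsto' hlimy hlimx fun N => ?_
      apply Finset.sum_le_sum
      intro n _
      have hm : (1 : ℝ) ≤ 1 + (n : ℝ) := by
        have := Nat.cast_nonneg (α := ℝ) n; linarith
      exact term_mono hm hx0 hxy hy1
    linarith
end

section
/- Define Ψ_F(x) = -ψ(1-x) - ψ(1+x) + ψ(1/2-x/2) + ψ(1/2+x/2) and F(x) = (Γ(1/2+x/2)/Γ(1/2-x/2))^2 · Γ(1-x)/Γ(1+x). Then F''(x) = F(x)·(Ψ_F(x)^2 + Ψ_F'(x)), and F''(x) > 0 for all x ∈ [0, 2/38] (in fact F'' ≥ 6.4 on this interval). -/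
set_option maxHeartbeats 1000000

noncomputable def F (v : ℝ) : ℝ :=
  (Real.Gamma (1 / 2 + v / 2) / Real.Gamma (1 / 2 - v / 2)) ^ 2 *
    (Real.Gamma (1 - v) / Real.Gamma (1 + v))

open Filter Topology Set Finset

local notation "γ" => Real.eulerMascheroniConstant

-- summable p=2,3 basics
lemma summable_sq : Summable (fun k : ℕ => 1/((k:ℝ)+1)^2) := by
  have := (summable_nat_add_iff (f := fun n : ℕ => 1/(n:ℝ)^2) 1).mpr
    (Real.summable_one_div_nat_pow.mpr one_lt_two)
  refine this.congr fun k => by push_cast; norm_num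
lemma summable_cube : Summable (fun k : ℕ => 1/((k:ℝ)+1)^3) := by
  have := (summable_nat_add_iff (f := fun n : ℕ => 1/(n:ℝ)^3) 1).mpr
    (Real.summable_one_div_nat_pow.mpr (by norm_num))
  refine this.congr fun k => by push_cast; norm_num

lemma summable_of_le_sq {f : ℕ → ℝ} {C : ℝ} (h0 : ∀ k, 0 ≤ f k)
    (h : ∀ k, f k ≤ C / ((k:ℝ)+1)^2) : Summable f :=
  Summable.of_nonneg_of_le h0 h (by simpa [div_eq_mul_inv, mul_comm] using summable_sq.mul_left C)
lemma summable_of_le_cube {f : ℕ → ℝ} {C : ℝ} (h0 : ∀ k, 0 ≤ f k)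
    (h : ∀ k, f k ≤ C / ((k:ℝ)+1)^3) : Summable f :=
  Summable.of_nonneg_of_le h0 h (by
    have := summable_cube.mul_left C
    refine this.congr fun k => by simp [div_eq_mul_inv])


lemma cube_tele {u : ℝ} (hu : 1 < u) : 1/u^3 ≤ (1/(u-1)^2 - 1/u^2)/2 := by
  have h0 : (0:ℝ) < u := lt_trans one_pos hu
  have h1 : (0:ℝ) < u - 1 := sub_pos.mpr hu
  rw [div_sub_div _ _ (by positivity) (by positivity), div_div,
    div_le_div_iff₀ (by positivity) (by positivity)]
  nlinarith [pow_pos h0 3, sq_nonneg u, sq_nonneg (u-1)]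

/-- tail bound: `∑_{k≥0} 1/(k+c+1)³ ≤ 1/(2c²)` for `c > 0` (telescoping). -/
lemma tsum_cube_tail_le (c : ℝ) (hc : 0 < c) :
    ∀ n : ℕ, ∑ k ∈ range n, 1/(((k:ℝ)+c)+1)^3 ≤ 1/(2*c^2) := by
  intro n
  set g : ℕ → ℝ := fun k => 1/((k:ℝ)+c)^2/2 with hg
  calc ∑ k ∈ range n, 1/(((k:ℝ)+c)+1)^3
      ≤ ∑ k ∈ range n, (g k - g (k+1)) := by
        refine Finset.sum_le_sum fun k _ => ?_
        have h := cube_tele (u := (k:ℝ)+c+1) (by linarith [Nat.cast_nonneg (α := ℝ) k])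
        have e : (k:ℝ)+c+1-1 = (k:ℝ)+c := by ring
        rw [e] at h
        simp only [hg]
        push_cast
        have e2 : ((k:ℝ)+1+c) = ((k:ℝ)+c+1) := by ring
        rw [e2]
        linarith
    _ = g 0 - g n := Finset.sum_range_sub' g n
    _ ≤ g 0 := by
        have : 0 ≤ g n := by positivity
        linarith
    _ = 1/(2*c^2) := by simp [hg]; ring

lemma tsum_cube_le : ∑' k : ℕ, 1/((k:ℝ)+1)^3 ≤ 3/2 := by
  have hsum := summable_cube
  rw [← Summable.sum_add_tsum_nat_add 1 hsum]
  have h2 : ∑' k : ℕ, 1/(((k+1:ℕ):ℝ)+1)^3 ≤ 1/2 := by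
    apply Real.tsum_le_of_sum_range_le (fun k => by positivity)
    intro n
    have := tsum_cube_tail_le 1 one_pos n
    calc ∑ k ∈ range n, 1/(((k+1:ℕ):ℝ)+1)^3
        = ∑ k ∈ range n, 1/(((k:ℝ)+1)+1)^3 := by
          refine Finset.sum_congr rfl fun k _ => by push_cast; ring_nf
      _ ≤ 1/(2*1^2) := this
      _ = 1/2 := by norm_num
  have h1 : ∑ k ∈ range 1, 1/((k:ℝ)+1)^3 = 1 := by norm_num
  rw [h1]
  linarith

/-- `∑' 1/(k+1/2)³ ≤ 8 + 8/27 + 8/125 + 8/343 + 2/49` -/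
lemma summable_halfcube : Summable (fun k : ℕ => 1/((k:ℝ)+1/2)^3) := by
  refine summable_of_le_cube (fun k => by positivity) (C := 8) fun k => ?_
  rw [div_le_div_iff₀ (by positivity) (by positivity)]
  have h := Nat.cast_nonneg (α := ℝ) k
  nlinarith [pow_nonneg h 3, sq_nonneg (k:ℝ)]

lemma tsum_halfcube_le : ∑' k : ℕ, 1/((k:ℝ)+1/2)^3 ≤ 8 + 8/27 + 8/125 + 8/343 + 2/49 := by
  rw [← Summable.sum_add_tsum_nat_add 4 summable_halfcube]
  have h1 : ∑ k ∈ range 4, 1/((k:ℝ)+1/2)^3 = 8 + 8/27 + 8/125 + 8/343 := by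
    simp [Finset.sum_range_succ]; norm_num
  have h2 : ∑' k : ℕ, 1/(((k+4:ℕ):ℝ)+1/2)^3 ≤ 2/49 := by
    apply Real.tsum_le_of_sum_range_le (fun k => by positivity)
    intro n
    have := tsum_cube_tail_le (7/2) (by norm_num) n
    calc ∑ k ∈ range n, 1/(((k+4:ℕ):ℝ)+1/2)^3
        = ∑ k ∈ range n, 1/(((k:ℝ)+7/2)+1)^3 := by
          refine Finset.sum_congr rfl fun k _ => by push_cast; ring_nf
      _ ≤ 1/(2*(7/2)^2) := this
      _ = 2/49 := by norm_num
  rw [h1]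
  linarith

noncomputable def dg (x : ℝ) : ℝ := -γ + ∑' k : ℕ, (1/((k:ℝ)+1) - 1/(x+(k:ℝ)))
noncomputable def tg (x : ℝ) : ℝ := ∑' k : ℕ, 1/(x+(k:ℝ))^2

lemma mem_S_bound {y : ℝ} (hy : y ∈ Set.Ioo (1/4:ℝ) 4) (k : ℕ) :
    ((k:ℝ)+1)/4 ≤ y + k ∧ 0 < y + (k:ℝ) := by
  have h0 : (0:ℝ) ≤ k := Nat.cast_nonneg _
  have h1 := hy.1
  constructor <;> [linarith; linarith]

lemma tendstoUniformlyOn_const_fun {c : ℕ → ℝ} {L : ℝ} (h : Tendsto c atTop (𝓝 L)) (s : Set ℝ) :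
    TendstoUniformlyOn (fun n (_ : ℝ) => c n) (fun _ => L) atTop s := by
  rw [Metric.tendstoUniformlyOn_iff]
  intro ε hε
  filter_upwards [Metric.tendsto_nhds.mp h ε hε] with n hn x _
  rwa [dist_comm]

lemma harmonic_real (m : ℕ) : ((harmonic m : ℚ) : ℝ) = ∑ i ∈ Finset.range m, 1/((i:ℝ)+1) := by
  rw [harmonic]
  push_cast
  simp [one_div]

lemma tendsto_log_sub_sum : Tendsto
    (fun n : ℕ => Real.log n - ∑ k ∈ Finset.range (n+1), 1/((k:ℝ)+1)) atTop (𝓝 (-γ)) := by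
  have h1 := Real.tendsto_harmonic_sub_log
  have h2 : Tendsto (fun n : ℕ => 1/((n:ℝ)+1)) atTop (𝓝 0) :=
    tendsto_one_div_add_atTop_nhds_zero_nat
  have h3 := (h1.neg).sub h2
  rw [show -γ - 0 = -γ by ring] at h3
  refine h3.congr fun n => ?_
  have : ∑ k ∈ Finset.range (n+1), 1/((k:ℝ)+1) = ((harmonic n : ℚ) : ℝ) + 1/((n:ℝ)+1) := by
    rw [← harmonic_real (n+1), harmonic_succ]
    push_cast
    ring
  rw [this]
  ring

lemma tendstoUniformlyOn_L' :
    TendstoUniformlyOn (fun (n : ℕ) (y : ℝ) => Real.log n - ∑ k ∈ Finset.range (n+1), 1/(y+(k:ℝ)))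
      dg atTop (Set.Ioo (1/4:ℝ) 4) := by
  have hB : TendstoUniformlyOn
      (fun (N : ℕ) (y : ℝ) => ∑ k ∈ Finset.range N, (1/((k:ℝ)+1) - 1/(y+(k:ℝ))))
      (fun y => ∑' k : ℕ, (1/((k:ℝ)+1) - 1/(y+(k:ℝ)))) atTop (Set.Ioo (1/4:ℝ) 4) := by
    apply tendstoUniformlyOn_tsum_nat (u := fun k => 12/((k:ℝ)+1)^2)
    · simpa [div_eq_mul_inv, mul_comm] using summable_sq.mul_left 12
    · intro k y hy
      obtain ⟨hk1, hk2⟩ := mem_S_bound hy k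
      have hkp : (0:ℝ) < (k:ℝ)+1 := by positivity
      have he : 1/((k:ℝ)+1) - 1/(y+(k:ℝ)) = (y-1)/(((k:ℝ)+1)*(y+(k:ℝ))) := by
        field_simp
        ring
      rw [Real.norm_eq_abs, he, abs_div, abs_of_pos (mul_pos hkp hk2)]
      rw [div_le_div_iff₀ (by positivity) (by positivity)]
      have hy1 : |y - 1| ≤ 3 := abs_le.mpr ⟨by linarith [hy.1], by linarith [hy.2]⟩
      nlinarith [mul_le_mul_of_nonneg_right hy1 (sq_nonneg ((k:ℝ)+1)),
        mul_le_mul_of_nonneg_left hk1 (by positivity : (0:ℝ) ≤ 12*((k:ℝ)+1))]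
  have hBshift : TendstoUniformlyOn
      (fun (n : ℕ) (y : ℝ) => ∑ k ∈ Finset.range (n+1), (1/((k:ℝ)+1) - 1/(y+(k:ℝ))))
      (fun y => ∑' k : ℕ, (1/((k:ℝ)+1) - 1/(y+(k:ℝ)))) atTop (Set.Ioo (1/4:ℝ) 4) :=
    fun u hu => (tendsto_add_atTop_nat 1).eventually (hB u hu)
  have hC := tendstoUniformlyOn_const_fun tendsto_log_sub_sum (Set.Ioo (1/4:ℝ) 4)
  have := hC.add hBshift
  have hfeq : (fun (n:ℕ) (y:ℝ) => Real.log n - ∑ k ∈ Finset.range (n+1), 1/(y+(k:ℝ)))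
      = ((fun (n:ℕ) (_:ℝ) => Real.log n - ∑ k ∈ Finset.range (n+1), 1/((k:ℝ)+1)) +
         (fun (n:ℕ) (y:ℝ) => ∑ k ∈ Finset.range (n+1), (1/((k:ℝ)+1) - 1/(y+(k:ℝ))))) := by
    funext n y
    simp only [Pi.add_apply, Finset.sum_sub_distrib]
    ring
  have hgeq : dg = ((fun (_:ℝ) => -γ) + fun y => ∑' k : ℕ, (1/((k:ℝ)+1) - 1/(y+(k:ℝ)))) := by
    funext y
    simp [dg]
  rw [hfeq, hgeq]
  exact this


lemma hasDerivAt_sum_log (n : ℕ) {y : ℝ} (hy : y ∈ Set.Ioo (1/4:ℝ) 4) :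
    HasDerivAt (fun z => ∑ k ∈ Finset.range (n+1), Real.log (z+(k:ℝ)))
      (∑ k ∈ Finset.range (n+1), 1/(y+(k:ℝ))) y := by
  apply HasDerivAt.fun_sum
  intro k _
  have hk2 := (mem_S_bound hy k).2
  have h := (Real.hasDerivAt_log hk2.ne').comp y ((hasDerivAt_id y).add_const (k:ℝ))
  simpa [one_div, Function.comp_def] using h

lemma level1 : ∀ x ∈ Set.Ioo (1/4:ℝ) 4,
    HasDerivAt (fun y => Real.log (Real.Gamma y)) (dg x) x ∧
    Tendsto (fun n : ℕ => Real.log n - ∑ k ∈ Finset.range (n+1), 1/(x+(k:ℝ))) atTop (𝓝 (dg x)) := by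
  intro x hx
  have hL : ∀ (n : ℕ), ∀ y ∈ Set.Ioo (1/4:ℝ) 4,
      HasDerivAt (fun z => z * Real.log n + Real.log ((Nat.factorial n : ℕ):ℝ)
          - ∑ k ∈ Finset.range (n+1), Real.log (z+(k:ℝ)))
        (Real.log n - ∑ k ∈ Finset.range (n+1), 1/(y+(k:ℝ))) y := by
    intro n y hy
    exact ((hasDerivAt_mul_const (Real.log n)).add_const (Real.log ((Nat.factorial n : ℕ):ℝ))).sub
      (hasDerivAt_sum_log n hy)
  have hfg : ∀ y ∈ Set.Ioo (1/4:ℝ) 4,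
      Tendsto (fun n : ℕ => y * Real.log n + Real.log ((Nat.factorial n : ℕ):ℝ)
          - ∑ k ∈ Finset.range (n+1), Real.log (y+(k:ℝ)))
        atTop (𝓝 (Real.log (Real.Gamma y))) := by
    intro y hy
    have hy0 : 0 < y := lt_trans (by norm_num) hy.1
    have h0 : 0 < Real.Gamma y := Real.Gamma_pos_of_pos hy0
    have h1 := (Real.continuousAt_log h0.ne').tendsto.comp (Real.GammaSeq_tendsto_Gamma y)
    refine h1.congr' ?_
    filter_upwards [eventually_ge_atTop 1] with n hn
    have hn0 : (0:ℝ) < n := by exact_mod_cast hn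
    have hprod : ∀ j ∈ Finset.range (n+1), y + (j:ℝ) ≠ 0 :=
      fun j _ => (mem_S_bound hy j).2.ne'
    have hprodpos : (0:ℝ) < ∏ j ∈ Finset.range (n+1), (y + (j:ℝ)) :=
      Finset.prod_pos fun j _ => (mem_S_bound hy j).2
    show Real.log (Real.GammaSeq y n) = _
    rw [Real.GammaSeq, Real.log_div (by positivity) hprodpos.ne',
      Real.log_mul (by positivity) (by positivity),
      Real.log_rpow hn0, Real.log_prod hprod]
  have key := hasDerivAt_of_tendstoUniformlyOn isOpen_Ioo tendstoUniformlyOn_L'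
    (Eventually.of_forall hL) hfg hx
  exact ⟨key, tendstoUniformlyOn_L'.tendsto_at hx⟩

lemma tendstoUniformlyOn_T :
    TendstoUniformlyOn (fun (n : ℕ) (y : ℝ) => ∑ k ∈ Finset.range (n+1), 1/(y+(k:ℝ))^2)
      tg atTop (Set.Ioo (1/4:ℝ) 4) := by
  have hB : TendstoUniformlyOn
      (fun (N : ℕ) (y : ℝ) => ∑ k ∈ Finset.range N, 1/(y+(k:ℝ))^2)
      (fun y => ∑' k : ℕ, 1/(y+(k:ℝ))^2) atTop (Set.Ioo (1/4:ℝ) 4) := by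
    apply tendstoUniformlyOn_tsum_nat (u := fun k => 16/((k:ℝ)+1)^2)
    · simpa [div_eq_mul_inv, mul_comm] using summable_sq.mul_left 16
    · intro k y hy
      obtain ⟨hk1, hk2⟩ := mem_S_bound hy k
      rw [Real.norm_eq_abs, abs_of_pos (by positivity), div_le_div_iff₀ (by positivity) (by positivity)]
      nlinarith [sq_nonneg ((k:ℝ)+1)]
  have hgeq : tg = (fun y => ∑' k : ℕ, 1/(y+(k:ℝ))^2) := by funext y; simp [tg]
  rw [hgeq]
  exact fun u hu => (tendsto_add_atTop_nat 1).eventually (hB u hu)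

lemma level2 : ∀ x ∈ Set.Ioo (1/4:ℝ) 4, HasDerivAt dg (tg x) x := by
  intro x hx
  have hL : ∀ (n : ℕ), ∀ y ∈ Set.Ioo (1/4:ℝ) 4,
      HasDerivAt (fun z => Real.log n - ∑ k ∈ Finset.range (n+1), 1/(z+(k:ℝ)))
        (∑ k ∈ Finset.range (n+1), 1/(y+(k:ℝ))^2) y := by
    intro n y hy
    have hsum : HasDerivAt (fun z => ∑ k ∈ Finset.range (n+1), 1/(z+(k:ℝ)))
        (∑ k ∈ Finset.range (n+1), -(1/(y+(k:ℝ))^2)) y := by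
      apply HasDerivAt.fun_sum
      intro k _
      have hk2 := (mem_S_bound hy k).2
      have h := ((hasDerivAt_id y).add_const (k:ℝ)).inv hk2.ne'
      simpa [one_div, neg_div, Pi.inv_def] using h
    have := hsum.const_sub (Real.log n)
    simpa [Finset.sum_neg_distrib] using this
  exact hasDerivAt_of_tendstoUniformlyOn isOpen_Ioo tendstoUniformlyOn_T
    (Eventually.of_forall hL) (fun y hy => (level1 y hy).2) hx

lemma digamma_eq : ∀ x ∈ Set.Ioo (1/4:ℝ) 4, digamma x = dg x :=
  fun x hx => ((level1 x hx).1).deriv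

lemma hasDerivAt_digamma : ∀ x ∈ Set.Ioo (1/4:ℝ) 4, HasDerivAt digamma (tg x) x := by
  intro x hx
  refine (level2 x hx).congr_of_eventuallyEq ?_
  filter_upwards [Ioo_mem_nhds hx.1 hx.2] with y hy
  exact digamma_eq y hy

lemma digamma_one : digamma 1 = -γ := by
  have h1 : HasDerivAt (fun y => Real.log (Real.Gamma y)) (-γ / Real.Gamma 1) 1 :=
    Real.hasDerivAt_Gamma_one.log (by rw [Real.Gamma_one]; norm_num)
  rw [digamma, h1.deriv, Real.Gamma_one, div_one]

lemma digamma_half : digamma (1/2) = -γ - 2 * Real.log 2 := by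
  have hpi : (0:ℝ) < Real.sqrt Real.pi := Real.sqrt_pos.mpr Real.pi_pos
  have h1 : HasDerivAt (fun y => Real.log (Real.Gamma y))
      ((-Real.sqrt Real.pi * (γ + 2 * Real.log 2)) / Real.Gamma (1/2)) (1/2) :=
    Real.hasDerivAt_Gamma_one_half.log (by rw [Real.Gamma_one_half_eq]; positivity)
  rw [digamma, h1.deriv, Real.Gamma_one_half_eq]
  field_simp
  ring

/-- the derivative of `PsiF` -/
noncomputable def Pd (t : ℝ) : ℝ :=
  tg (1-t) - tg (1+t) - tg (1/2-t/2)/2 + tg (1/2+t/2)/2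

lemma hasDerivAt_PsiF {t : ℝ} (ht : t ∈ Set.Ioo (-(1/8):ℝ) (1/8)) :
    HasDerivAt PsiF (Pd t) t := by
  obtain ⟨ht1, ht2⟩ := ht
  have m1 : (1 - t) ∈ Set.Ioo (1/4:ℝ) 4 := by constructor <;> [linarith; linarith]
  have m2 : (1 + t) ∈ Set.Ioo (1/4:ℝ) 4 := by constructor <;> [linarith; linarith]
  have m3 : (1/2 - t/2) ∈ Set.Ioo (1/4:ℝ) 4 := by constructor <;> [linarith; linarith]
  have m4 : (1/2 + t/2) ∈ Set.Ioo (1/4:ℝ) 4 := by constructor <;> [linarith; linarith]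
  have h1 : HasDerivAt (fun v => digamma (1 - v)) (tg (1-t) * (-1)) t :=
    (hasDerivAt_digamma _ m1).comp t ((hasDerivAt_id t).const_sub 1)
  have h2 : HasDerivAt (fun v => digamma (1 + v)) (tg (1+t) * 1) t :=
    (hasDerivAt_digamma _ m2).comp t ((hasDerivAt_id t).const_add 1)
  have i3 : HasDerivAt (fun v : ℝ => 1/2 - v/2) (-(1/2)) t := by
    exact ((hasDerivAt_id t).div_const 2).const_sub (1/2 : ℝ)
  have i4 : HasDerivAt (fun v : ℝ => 1/2 + v/2) (1/2) t := by
    exact ((hasDerivAt_id t).div_const 2).const_add (1/2 : ℝ)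
  have h3 : HasDerivAt (fun v => digamma (1/2 - v/2)) (tg (1/2-t/2) * (-(1/2))) t :=
    (hasDerivAt_digamma _ m3).comp t i3
  have h4 : HasDerivAt (fun v => digamma (1/2 + v/2)) (tg (1/2+t/2) * (1/2)) t :=
    (hasDerivAt_digamma _ m4).comp t i4
  have h := ((h1.fun_neg.fun_sub h2).fun_add h3).fun_add h4
  have he : PsiF = fun v => -digamma (1 - v) - digamma (1 + v)
      + digamma (1/2 - v/2) + digamma (1/2 + v/2) := by
    funext v; rw [PsiF]
  rw [he]
  refine h.congr_deriv ?_
  rw [Pd]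
  ring

lemma PsiF_zero : PsiF 0 = -(4 * Real.log 2) := by
  rw [PsiF]
  norm_num [digamma_one, digamma_half]
  ring


lemma summable_tg {y : ℝ} (hy : 1/4 ≤ y) : Summable (fun k : ℕ => 1/(y+(k:ℝ))^2) := by
  refine summable_of_le_sq (fun k => by
    have : (0:ℝ) < y + k := by have := Nat.cast_nonneg (α := ℝ) k; linarith
    positivity) (C := 16) fun k => ?_
  have h0 : (0:ℝ) ≤ k := Nat.cast_nonneg _
  have : (0:ℝ) < y + k := by linarith
  rw [div_le_div_iff₀ (by positivity) (by positivity)]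
  nlinarith [sq_nonneg ((k:ℝ)+1)]

section PdBounds

variable {t : ℝ}

noncomputable def Aterm (t : ℝ) (k : ℕ) : ℝ := 4*((k:ℝ)+1)*t/((((k:ℝ)+1)^2 - t^2)^2)
noncomputable def Bterm (t : ℝ) (k : ℕ) : ℝ := ((k:ℝ)+1/2)*t/(((((k:ℝ)+1/2))^2 - t^2/4)^2)

lemma term_facts (ht0 : 0 ≤ t) (ht : t ≤ 1/19) (k : ℕ) :
    0 < (((k:ℝ)+1)^2 - t^2) ∧ 0 < ((((k:ℝ)+1/2))^2 - t^2/4) ∧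
    ((k:ℝ)+1)^2 * (360/361) ≤ (((k:ℝ)+1)^2 - t^2) ∧
    (((k:ℝ)+1/2))^2 * (360/361) ≤ ((((k:ℝ)+1/2))^2 - t^2/4) := by
  have h0 : (0:ℝ) ≤ k := Nat.cast_nonneg _
  have h1 : (1:ℝ) ≤ ((k:ℝ)+1)^2 := by nlinarith
  have h2 : (1/4:ℝ) ≤ ((k:ℝ)+1/2)^2 := by nlinarith
  have h3 : t^2 ≤ 1/361 := by nlinarith
  refine ⟨by nlinarith, by nlinarith, by nlinarith, by nlinarith⟩

lemma Aterm_nonneg (ht0 : 0 ≤ t) (ht : t ≤ 1/19) (k : ℕ) : 0 ≤ Aterm t k := by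
  have h := (term_facts ht0 ht k).1
  have h0 : (0:ℝ) ≤ k := Nat.cast_nonneg _
  rw [Aterm]; positivity

lemma Bterm_nonneg (ht0 : 0 ≤ t) (ht : t ≤ 1/19) (k : ℕ) : 0 ≤ Bterm t k := by
  have h := (term_facts ht0 ht k).2.1
  have h0 : (0:ℝ) ≤ k := Nat.cast_nonneg _
  rw [Bterm]; positivity

lemma Aterm_le (ht0 : 0 ≤ t) (ht : t ≤ 1/19) (k : ℕ) :
    Aterm t k ≤ ((361/360)^2*4*t) * (1/((k:ℝ)+1)^3) := by
  obtain ⟨hp, -, hb, -⟩ := term_facts ht0 ht k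
  have h0 : (0:ℝ) ≤ k := Nat.cast_nonneg _
  rw [Aterm, div_le_iff₀ (by positivity)]
  have hsq : (((k:ℝ)+1)^2 * (360/361))^2 ≤ (((k:ℝ)+1)^2 - t^2)^2 := by
    apply sq_le_sq' <;> nlinarith
  have hk3 : (0:ℝ) < ((k:ℝ)+1)^3 := by positivity
  calc 4*((k:ℝ)+1)*t = (((361/360)^2*4*t) * (1/((k:ℝ)+1)^3)) * ((((k:ℝ)+1)^2*(360/361))^2) := by
        field_simp
    _ ≤ (((361/360)^2*4*t) * (1/((k:ℝ)+1)^3)) * ((((k:ℝ)+1)^2 - t^2)^2) := by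
        have hnn : 0 ≤ ((361/360:ℝ)^2*4*t) * (1/((k:ℝ)+1)^3) := by positivity
        exact mul_le_mul_of_nonneg_left hsq hnn

lemma Bterm_le (ht0 : 0 ≤ t) (ht : t ≤ 1/19) (k : ℕ) :
    Bterm t k ≤ ((361/360)^2*t) * (1/((k:ℝ)+1/2)^3) := by
  obtain ⟨-, hp, -, hb⟩ := term_facts ht0 ht k
  have h0 : (0:ℝ) ≤ k := Nat.cast_nonneg _
  have hv : (0:ℝ) < (k:ℝ)+1/2 := by linarith
  rw [Bterm, div_le_iff₀ (by positivity)]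
  have hsq : (((k:ℝ)+1/2)^2 * (360/361))^2 ≤ (((k:ℝ)+1/2)^2 - t^2/4)^2 := by
    apply sq_le_sq' <;> nlinarith
  have hk3 : (0:ℝ) < ((k:ℝ)+1/2)^3 := by positivity
  calc ((k:ℝ)+1/2)*t = (((361/360)^2*t) * (1/((k:ℝ)+1/2)^3)) * ((((k:ℝ)+1/2)^2*(360/361))^2) := by
        field_simp
    _ ≤ (((361/360)^2*t) * (1/((k:ℝ)+1/2)^3)) * ((((k:ℝ)+1/2)^2 - t^2/4)^2) := by
        have hnn : 0 ≤ ((361/360:ℝ)^2*t) * (1/((k:ℝ)+1/2)^3) := by positivity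
        exact mul_le_mul_of_nonneg_left hsq hnn

lemma summable_Aterm (ht0 : 0 ≤ t) (ht : t ≤ 1/19) : Summable (Aterm t) :=
  summable_of_le_cube (Aterm_nonneg ht0 ht) (C := (361/360)^2*4*t) fun k => by
    simpa [div_eq_mul_inv, one_div] using Aterm_le ht0 ht k

lemma summable_Bterm (ht0 : 0 ≤ t) (ht : t ≤ 1/19) : Summable (Bterm t) := by
  refine Summable.of_nonneg_of_le (Bterm_nonneg ht0 ht)
    (fun k => Bterm_le ht0 ht k) ?_
  exact summable_halfcube.mul_left _

end PdBounds

lemma Pd_eq {t : ℝ} (ht0 : 0 ≤ t) (ht : t ≤ 1/19) :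
    Pd t = (∑' k, Aterm t k) - (∑' k, Bterm t k) := by
  have hs1 : Summable (fun k : ℕ => 1/((1-t)+(k:ℝ))^2) := summable_tg (by linarith)
  have hs2 : Summable (fun k : ℕ => 1/((1+t)+(k:ℝ))^2) := summable_tg (by linarith)
  have hs3 : Summable (fun k : ℕ => 1/((1/2-t/2)+(k:ℝ))^2) := summable_tg (by linarith)
  have hs4 : Summable (fun k : ℕ => 1/((1/2+t/2)+(k:ℝ))^2) := summable_tg (by linarith)
  have hA : tg (1-t) - tg (1+t) = ∑' k, Aterm t k := by
    rw [tg, tg, ← Summable.tsum_sub hs1 hs2]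
    refine tsum_congr fun k => ?_
    have h0 : (0:ℝ) ≤ k := Nat.cast_nonneg _
    have hd1 : (0:ℝ) < (1-t)+(k:ℝ) := by linarith
    have hd2 : (0:ℝ) < (1+t)+(k:ℝ) := by linarith
    have hd3 := (term_facts ht0 ht k).1
    rw [Aterm, div_sub_div _ _ (by positivity) (by positivity),
      div_eq_div_iff (by positivity) (by positivity)]
    ring
  have hB : tg (1/2+t/2)/2 - tg (1/2-t/2)/2 = -∑' k, Bterm t k := by
    rw [tg, tg, div_sub_div_same, ← Summable.tsum_sub hs4 hs3, ← tsum_neg]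
    rw [show (∑' k : ℕ, (1/((1/2+t/2)+(k:ℝ))^2 - 1/((1/2-t/2)+(k:ℝ))^2))/2
        = ∑' k : ℕ, (1/((1/2+t/2)+(k:ℝ))^2 - 1/((1/2-t/2)+(k:ℝ))^2)/2 by
      rw [tsum_div_const]]
    refine tsum_congr fun k => ?_
    have h0 : (0:ℝ) ≤ k := Nat.cast_nonneg _
    have hd1 : (0:ℝ) < (1/2+t/2)+(k:ℝ) := by linarith
    have hd2 : (0:ℝ) < (1/2-t/2)+(k:ℝ) := by linarith
    have hd3 := (term_facts ht0 ht k).2.1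
    rw [Bterm, div_sub_div _ _ (by positivity) (by positivity), div_div, ← neg_div,
      div_eq_div_iff (by positivity) (by positivity)]
    ring
  rw [Pd]
  have : tg (1-t) - tg (1+t) - tg (1/2-t/2)/2 + tg (1/2+t/2)/2
      = (tg (1-t) - tg (1+t)) + (tg (1/2+t/2)/2 - tg (1/2-t/2)/2) := by ring
  rw [this, hA, hB]
  ring

lemma Pd_bounds {t : ℝ} (ht0 : 0 ≤ t) (ht : t ≤ 1/19) :
    -(0.198:ℝ) ≤ Pd t ∧ Pd t ≤ 0 := by
  have hsA := summable_Aterm ht0 ht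
  have hsB := summable_Bterm ht0 ht
  -- upper bound for ∑ A
  have hAub : ∑' k, Aterm t k ≤ (361/360)^2*4*t * (3/2) := by
    have h1 : ∑' k, Aterm t k ≤ ∑' k : ℕ, ((361/360)^2*4*t) * (1/((k:ℝ)+1)^3) := by
      refine Summable.tsum_le_tsum (fun k => Aterm_le ht0 ht k) hsA ?_
      exact (summable_cube.mul_left _)
    rw [tsum_mul_left] at h1
    calc ∑' k, Aterm t k ≤ (361/360)^2*4*t * ∑' k : ℕ, 1/((k:ℝ)+1)^3 := h1
      _ ≤ (361/360)^2*4*t * (3/2) := by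
          apply mul_le_mul_of_nonneg_left tsum_cube_le (by positivity)
  -- lower bound for ∑ A
  have hAlb : (2035/432)*t ≤ ∑' k, Aterm t k := by
    have h1 : ∑ k ∈ range 4, Aterm t k ≤ ∑' k, Aterm t k :=
      Summable.sum_le_tsum _ (fun k _ => Aterm_nonneg ht0 ht k) hsA
    have h2 : (2035/432)*t ≤ ∑ k ∈ range 4, Aterm t k := by
      have e : ∑ k ∈ range 4, Aterm t k
          = 4*t/((1-t^2)^2) + 8*t/((4-t^2)^2) + 12*t/((9-t^2)^2) + 16*t/((16-t^2)^2) := by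
        simp [Finset.sum_range_succ, Aterm]
        norm_num
      have ht2 : t^2 ≤ 1/361 := by nlinarith
      have c0 : (1-t^2)^2 ≤ 1 := by nlinarith
      have c1 : (4-t^2)^2 ≤ 16 := by nlinarith
      have c2 : (9-t^2)^2 ≤ 81 := by nlinarith
      have c3 : (16-t^2)^2 ≤ 256 := by nlinarith
      have b0 : 4*t ≤ 4*t/((1-t^2)^2) := by
        rw [le_div_iff₀ (by nlinarith)]
        nlinarith [mul_le_mul_of_nonneg_left c0 (by linarith : (0:ℝ) ≤ 4*t)]
      have b1 : t/2 ≤ 8*t/((4-t^2)^2) := by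
        rw [div_le_div_iff₀ (by norm_num) (by nlinarith)]
        nlinarith [mul_le_mul_of_nonneg_left c1 ht0]
      have b2 : 12*t/81 ≤ 12*t/((9-t^2)^2) := by
        rw [div_le_div_iff₀ (by norm_num) (by nlinarith)]
        nlinarith [mul_le_mul_of_nonneg_left c2 ht0]
      have b3 : t/16 ≤ 16*t/((16-t^2)^2) := by
        rw [div_le_div_iff₀ (by norm_num) (by nlinarith)]
        nlinarith [mul_le_mul_of_nonneg_left c3 ht0]
      rw [e]
      linarith
    linarith
  -- lower bound for ∑ B
  have hBlb : 8*t ≤ ∑' k, Bterm t k := by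
    have h1 := Summable.le_tsum hsB 0 (fun k _ => Bterm_nonneg ht0 ht k)
    have h2 : 8*t ≤ Bterm t 0 := by
      rw [Bterm]
      push_cast
      have hd : (0:ℝ) < ((1/2:ℝ)^2 - t^2/4)^2 := by nlinarith [sq_nonneg (t^2)]
      rw [le_div_iff₀ (by nlinarith [sq_nonneg (t^2)])]
      have d : ((0:ℝ)+1/2)^2 - t^2/4 ≤ 1/4 := by nlinarith
      have d0 : (0:ℝ) ≤ ((0:ℝ)+1/2)^2 - t^2/4 := by nlinarith
      have d2 : (((0:ℝ)+1/2)^2 - t^2/4)^2 ≤ 1/16 := by nlinarith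
      nlinarith [mul_le_mul_of_nonneg_left d2 (by linarith : (0:ℝ) ≤ 8*t)]
    linarith
  -- upper bound for ∑ B
  have hBub : ∑' k, Bterm t k ≤ (361/360)^2*t * (8 + 8/27 + 8/125 + 8/343 + 2/49) := by
    have h1 : ∑' k, Bterm t k ≤ ∑' k : ℕ, ((361/360)^2*t) * (1/((k:ℝ)+1/2)^3) := by
      refine Summable.tsum_le_tsum (fun k => Bterm_le ht0 ht k) hsB (summable_halfcube.mul_left _)
    rw [tsum_mul_left] at h1
    calc ∑' k, Bterm t k ≤ (361/360)^2*t * ∑' k : ℕ, 1/((k:ℝ)+1/2)^3 := h1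
      _ ≤ _ := mul_le_mul_of_nonneg_left tsum_halfcube_le (by positivity)
  rw [Pd_eq ht0 ht]
  constructor
  · nlinarith
  · nlinarith

lemma PsiF_bounds {x : ℝ} (hx0 : 0 ≤ x) (hx : x ≤ 1/19) :
    PsiF x ≤ -(4*Real.log 2) ∧ -(4*Real.log 2) - 0.198*x ≤ PsiF x := by
  rcases eq_or_lt_of_le hx0 with rfl | hpos
  · rw [PsiF_zero]
    norm_num
  · have hcont : ContinuousOn PsiF (Icc 0 x) := fun y hy =>
      (hasDerivAt_PsiF ⟨by linarith [hy.1], by linarith [hy.2]⟩).continuousAt.continuousWithinAt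
    have hder : ∀ y ∈ Ioo 0 x, HasDerivAt PsiF (Pd y) y := fun y hy =>
      hasDerivAt_PsiF ⟨by linarith [hy.1], by linarith [hy.2]⟩
    obtain ⟨c, hc, hceq⟩ := exists_hasDerivAt_eq_slope PsiF Pd hpos hcont hder
    have hP := Pd_bounds (le_of_lt hc.1) (by linarith [hc.2] : c ≤ 1/19)
    have hx' : PsiF x = PsiF 0 + Pd c * x := by
      rw [sub_zero] at hceq
      have h2 : Pd c * x = PsiF x - PsiF 0 := by
        rw [hceq, div_mul_cancel₀ _ hpos.ne']
      linarith
    rw [hx', PsiF_zero]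
    constructor
    · nlinarith [hP.2]
    · nlinarith [hP.1]

noncomputable def Gf (v : ℝ) : ℝ :=
  2*Real.log (Real.Gamma (1/2+v/2)) - 2*Real.log (Real.Gamma (1/2-v/2))
    + Real.log (Real.Gamma (1-v)) - Real.log (Real.Gamma (1+v))

lemma Gf_zero : Gf 0 = 0 := by
  rw [Gf]
  norm_num

lemma Gamma_pos_mem {v : ℝ} (hv : v ∈ Set.Ioo (-(1/8):ℝ) (1/8)) :
    0 < Real.Gamma (1/2+v/2) ∧ 0 < Real.Gamma (1/2-v/2) ∧
    0 < Real.Gamma (1-v) ∧ 0 < Real.Gamma (1+v) := by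
  obtain ⟨h1, h2⟩ := hv
  exact ⟨Real.Gamma_pos_of_pos (by linarith), Real.Gamma_pos_of_pos (by linarith),
    Real.Gamma_pos_of_pos (by linarith), Real.Gamma_pos_of_pos (by linarith)⟩

lemma F_eq_exp {v : ℝ} (hv : v ∈ Set.Ioo (-(1/8):ℝ) (1/8)) : F v = Real.exp (Gf v) := by
  obtain ⟨p1, p2, p3, p4⟩ := Gamma_pos_mem hv
  have hF : 0 < F v := by
    rw [F]
    exact mul_pos (pow_pos (div_pos p1 p2) 2) (div_pos p3 p4)
  have e : Real.log (F v) = Gf v := by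
    rw [F, Real.log_mul (pow_ne_zero 2 (div_pos p1 p2).ne') (div_pos p3 p4).ne',
      Real.log_pow, Real.log_div p1.ne' p2.ne', Real.log_div p3.ne' p4.ne', Gf]
    push_cast
    ring
  rw [← e, Real.exp_log hF]

lemma hasDerivAt_logGamma_digamma {w : ℝ} (hw : w ∈ Set.Ioo (1/4:ℝ) 4) :
    HasDerivAt (fun y => Real.log (Real.Gamma y)) (digamma w) w := by
  rw [digamma_eq w hw]
  exact (level1 w hw).1

lemma hasDerivAt_Gf {v : ℝ} (hv : v ∈ Set.Ioo (-(1/8):ℝ) (1/8)) :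
    HasDerivAt Gf (PsiF v) v := by
  obtain ⟨ht1, ht2⟩ := hv
  have m1 : (1 - v) ∈ Set.Ioo (1/4:ℝ) 4 := by constructor <;> [linarith; linarith]
  have m2 : (1 + v) ∈ Set.Ioo (1/4:ℝ) 4 := by constructor <;> [linarith; linarith]
  have m3 : (1/2 - v/2) ∈ Set.Ioo (1/4:ℝ) 4 := by constructor <;> [linarith; linarith]
  have m4 : (1/2 + v/2) ∈ Set.Ioo (1/4:ℝ) 4 := by constructor <;> [linarith; linarith]
  have i3 : HasDerivAt (fun w : ℝ => 1/2 - w/2) (-(1/2)) v :=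
    ((hasDerivAt_id v).div_const 2).const_sub (1/2 : ℝ)
  have i4 : HasDerivAt (fun w : ℝ => 1/2 + w/2) (1/2) v :=
    ((hasDerivAt_id v).div_const 2).const_add (1/2 : ℝ)
  have h1 : HasDerivAt (fun w => Real.log (Real.Gamma (1 - w))) (digamma (1-v) * (-1)) v :=
    (hasDerivAt_logGamma_digamma m1).comp v ((hasDerivAt_id v).const_sub 1)
  have h2 : HasDerivAt (fun w => Real.log (Real.Gamma (1 + w))) (digamma (1+v) * 1) v :=
    (hasDerivAt_logGamma_digamma m2).comp v ((hasDerivAt_id v).const_add 1)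
  have h3 : HasDerivAt (fun w => Real.log (Real.Gamma (1/2 - w/2))) (digamma (1/2-v/2) * (-(1/2))) v :=
    HasDerivAt.comp (h₂ := fun y => Real.log (Real.Gamma y)) v (hasDerivAt_logGamma_digamma m3) i3
  have h4 : HasDerivAt (fun w => Real.log (Real.Gamma (1/2 + w/2))) (digamma (1/2+v/2) * (1/2)) v :=
    HasDerivAt.comp (h₂ := fun y => Real.log (Real.Gamma y)) v (hasDerivAt_logGamma_digamma m4) i4
  have h := (((h4.const_mul 2).fun_sub (h3.const_mul 2)).fun_add h1).fun_sub h2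
  have he : Gf = fun w => 2*Real.log (Real.Gamma (1/2+w/2)) - 2*Real.log (Real.Gamma (1/2-w/2))
      + Real.log (Real.Gamma (1-w)) - Real.log (Real.Gamma (1+w)) := by
    funext w; rw [Gf]
  rw [he, PsiF]
  refine h.congr_deriv ?_
  ring

lemma hasDerivAt_F {v : ℝ} (hv : v ∈ Set.Ioo (-(1/8):ℝ) (1/8)) :
    HasDerivAt F (F v * PsiF v) v := by
  have h := (Real.hasDerivAt_exp (Gf v)).comp v (hasDerivAt_Gf hv)
  have heq : F =ᶠ[𝓝 v] fun w => Real.exp (Gf w) := by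
    filter_upwards [Ioo_mem_nhds hv.1 hv.2] with w hw
    exact F_eq_exp hw
  have h2 := h.congr_of_eventuallyEq heq
  rwa [← F_eq_exp hv] at h2

lemma exp_lb {c : ℝ} (hc : 0 ≤ c) (hc1 : c ≤ 1) : (1 - c/4)^4 ≤ Real.exp (-c) := by
  have h4 : Real.exp (-c) = (Real.exp (-c/4))^4 := by
    rw [← Real.exp_nat_mul]
    push_cast
    ring_nf
  have h5 : 1 - c/4 ≤ Real.exp (-c/4) := by
    have := Real.add_one_le_exp (-c/4)
    linarith
  rw [h4]
  exact pow_le_pow_left₀ (by linarith) h5 4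

theorem F_second_deriv_pos :
    ∀ x ∈ Set.Icc (0 : ℝ) (2 / 38),
      iteratedDeriv 2 F x = F x * ((PsiF x) ^ 2 + deriv PsiF x) ∧
        0 < iteratedDeriv 2 F x ∧ (6.4 : ℝ) ≤ iteratedDeriv 2 F x := by
  intro x hx
  obtain ⟨hx0, hx2⟩ := hx
  have hx19 : x ≤ 1/19 := by linarith
  have hxI : x ∈ Set.Ioo (-(1/8):ℝ) (1/8) := ⟨by linarith, by linarith⟩
  have hPdx : deriv PsiF x = Pd x := (hasDerivAt_PsiF hxI).deriv
  have hform : iteratedDeriv 2 F x = F x * ((PsiF x)^2 + deriv PsiF x) := by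
    rw [iteratedDeriv_succ, iteratedDeriv_one]
    have heq : deriv F =ᶠ[𝓝 x] fun v => F v * PsiF v := by
      filter_upwards [Ioo_mem_nhds hxI.1 hxI.2] with v hv
      exact (hasDerivAt_F hv).deriv
    rw [heq.deriv_eq, ((hasDerivAt_F hxI).fun_mul (hasDerivAt_PsiF hxI)).deriv, hPdx]
    ring
  have hlog1 : (0.6931471803:ℝ) < Real.log 2 := Real.log_two_gt_d9
  have hlog2 : Real.log 2 < 0.6931471808 := Real.log_two_lt_d9
  have hPsi := PsiF_bounds hx0 hx19
  have hPd := Pd_bounds hx0 hx19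
  have hsq : (2.7725887212:ℝ)^2 ≤ (PsiF x)^2 := by
    have h1 : (2.7725887212:ℝ) ≤ -PsiF x := by linarith [hPsi.1]
    have h2 := pow_le_pow_left₀ (by norm_num : (0:ℝ) ≤ 2.7725887212) h1 2
    have h3 : (-PsiF x)^2 = (PsiF x)^2 := by ring
    rw [h3] at h2
    exact h2
  have hsum : (2.7725887212:ℝ)^2 - 0.198 ≤ (PsiF x)^2 + deriv PsiF x := by
    rw [hPdx]
    linarith [hPd.1]
  have hGf : -(0.146475:ℝ) ≤ Gf x := by
    rcases eq_or_lt_of_le hx0 with rfl | hpos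
    · rw [Gf_zero]
      norm_num
    · have hcont : ContinuousOn Gf (Icc 0 x) := fun y hy =>
        (hasDerivAt_Gf ⟨by linarith [hy.1], by linarith [hy.2]⟩).continuousAt.continuousWithinAt
      have hder : ∀ y ∈ Ioo 0 x, HasDerivAt Gf (PsiF y) y := fun y hy =>
        hasDerivAt_Gf ⟨by linarith [hy.1], by linarith [hy.2]⟩
      obtain ⟨c, hc, hceq⟩ := exists_hasDerivAt_eq_slope Gf PsiF hpos hcont hder
      rw [sub_zero] at hceq
      have h2 : PsiF c * x = Gf x - Gf 0 := by
        rw [hceq, div_mul_cancel₀ _ hpos.ne']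
      have hPc := (PsiF_bounds hc.1.le (by linarith [hc.2])).2
      have hPc2 : -(2.7830098:ℝ) ≤ PsiF c := by nlinarith [hc.1, hc.2]
      have hPc3 : PsiF c ≤ 0 := by nlinarith [hPsi.1, (PsiF_bounds hc.1.le (by linarith [hc.2])).1]
      have hmul : -(2.7830098:ℝ) * x ≤ PsiF c * x :=
        mul_le_mul_of_nonneg_right hPc2 hpos.le
      rw [Gf_zero] at h2
      nlinarith [hmul]
  have hF : (0.8613:ℝ) ≤ F x := by
    rw [F_eq_exp hxI]
    have h1 := exp_lb (c := 0.146475) (by norm_num) (by norm_num)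
    have h2 : Real.exp (-(0.146475:ℝ)) ≤ Real.exp (Gf x) := Real.exp_le_exp.mpr hGf
    have h3 : (0.8613:ℝ) ≤ ((1:ℝ) - 0.146475/4)^4 := by norm_num
    linarith
  have h64 : (6.4:ℝ) ≤ iteratedDeriv 2 F x := by
    rw [hform]
    calc (6.4:ℝ) ≤ 0.8613 * ((2.7725887212:ℝ)^2 - 0.198) := by norm_num
      _ ≤ F x * ((PsiF x)^2 + deriv PsiF x) :=
        mul_le_mul hF hsum (by norm_num) (by linarith)
  exact ⟨hform, by linarith, h64⟩
end
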